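/- Let M be the commutative monoid presented by one generator a and relations a = m·a and a = n·a, where m, n ≥ 2, and let d = gcd(n−1, m−1). Then M is isomorphic to the monoid presented by one generator a and the single relation a = (d+1)·a; i.e., the congruence on ℕ generated by {(1,m),(1,n)} equals the congruence generated by (1, d+1). -/

import Mathlib

private lemma bezout_nat (a b : ℕ) (ha : 0 < a) (hb : 0 < b) :
    ∃ x y : ℕ, x * a = Nat.gcd a b + y * b := by
  have hg := Nat.gcd_eq_gcd_ab a b
  set u := Nat.gcdA a b with hu
  set v := Nat.gcdB a b with hv
  set t : ℕ := u.natAbs + v.natAbs + 1 with ht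
  have hta : (t : ℤ) ≤ t * a := by
    nlinarith [Int.ofNat_le.2 ha.le, (show (0:ℤ) ≤ (t:ℤ) by positivity)]
  have htb : (t : ℤ) ≤ t * b := by
    nlinarith [Int.ofNat_le.2 hb.le, (show (0:ℤ) ≤ (t:ℤ) by positivity)]
  have hut : (u.natAbs : ℤ) ≤ t := by
    push_cast [ht]; linarith [abs_nonneg u, abs_nonneg v]
  have hvt : (v.natAbs : ℤ) ≤ t := by
    push_cast [ht]; linarith [abs_nonneg u, abs_nonneg v]
  have hu' : -u ≤ (u.natAbs : ℤ) := by rw [← Int.natAbs_neg]; exact Int.le_natAbs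
  have hv' : v ≤ (v.natAbs : ℤ) := Int.le_natAbs
  have hx : (0:ℤ) ≤ u + t * b := by linarith
  have hy : (0:ℤ) ≤ t * a - v := by linarith
  refine ⟨(u + t * b).toNat, (t * a - v).toNat, ?_⟩
  have : ((u + t * b).toNat * a : ℤ) = Nat.gcd a b + (t * a - v).toNat * b := by
    rw [Int.toNat_of_nonneg hx, Int.toNat_of_nonneg hy]
    linear_combination -hg
  exact_mod_cast this

private lemma mult_step (c : AddCon ℕ) (a : ℕ) (h : ∀ k : ℕ, c (k + 1) (k + 1 + a)) :
    ∀ t k : ℕ, c (k + 1) (k + 1 + t * a) := by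
  intro t
  induction t with
  | zero => intro k; simpa using c.refl (k + 1)
  | succ t ih =>
    intro k
    have h2 := h (k + t * a)
    have e1 : k + t * a + 1 = k + 1 + t * a := by ring
    have e2 : k + t * a + 1 + a = k + 1 + (t + 1) * a := by ring
    rw [e2] at h2; rw [e1] at h2
    exact c.trans (ih k) h2

private lemma one_step (c : AddCon ℕ) (m : ℕ) (hm : 1 ≤ m) (h : c 1 m) (k : ℕ) :
    c (k + 1) (k + 1 + (m - 1)) := by
  have := c.add (c.refl k) h
  have e : k + 1 + (m - 1) = k + m := by omega
  rwa [e]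

theorem stmt_17 (m n : ℕ) (hm : 2 ≤ m) (hn : 2 ≤ n) :
    addConGen (fun a b : ℕ => (a = 1 ∧ b = m) ∨ (a = 1 ∧ b = n)) =
      addConGen (fun a b : ℕ => a = 1 ∧ b = Nat.gcd (m - 1) (n - 1) + 1) := by
  set g := Nat.gcd (m - 1) (n - 1) with hgdef
  apply le_antisymm
  · apply AddCon.addConGen_le.mpr
    rintro x y (⟨hx, hy⟩ | ⟨hx, hy⟩) <;> rw [hx, hy]
    · set c := addConGen (fun a b : ℕ => a = 1 ∧ b = g + 1) with hc
      have base : c 1 (g + 1) := AddConGen.Rel.of _ _ ⟨rfl, rfl⟩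
      have step := one_step c (g + 1) (by omega) base
      simp only [Nat.add_sub_cancel] at step
      obtain ⟨t, ht⟩ : g ∣ m - 1 := Nat.gcd_dvd_left _ _
      rw [Nat.mul_comm] at ht
      have := mult_step c g step t 0
      have e : 0 + 1 + t * g = m := by omega
      rw [e] at this; simpa using this
    · set c := addConGen (fun a b : ℕ => a = 1 ∧ b = g + 1) with hc
      have base : c 1 (g + 1) := AddConGen.Rel.of _ _ ⟨rfl, rfl⟩
      have step := one_step c (g + 1) (by omega) base
      simp only [Nat.add_sub_cancel] at step
      obtain ⟨t, ht⟩ : g ∣ n - 1 := Nat.gcd_dvd_right _ _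
      rw [Nat.mul_comm] at ht
      have := mult_step c g step t 0
      have e : 0 + 1 + t * g = n := by omega
      rw [e] at this; simpa using this
  · apply AddCon.addConGen_le.mpr
    rintro x y ⟨hx, hy⟩
    rw [hx, hy]
    set c := addConGen (fun a b : ℕ => (a = 1 ∧ b = m) ∨ (a = 1 ∧ b = n)) with hc
    have basem : c 1 m := AddConGen.Rel.of _ _ (Or.inl ⟨rfl, rfl⟩)
    have basen : c 1 n := AddConGen.Rel.of _ _ (Or.inr ⟨rfl, rfl⟩)
    have stepm := mult_step c (m - 1) (one_step c m (by omega) basem)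
    have stepn := mult_step c (n - 1) (one_step c n (by omega) basen)
    obtain ⟨x, y, hxy⟩ := bezout_nat (m - 1) (n - 1) (by omega) (by omega)
    have h1 : c 1 (0 + 1 + x * (m - 1)) := stepm x 0
    have h2 : c (g + 1) (g + 1 + y * (n - 1)) := stepn y g
    have e : 0 + 1 + x * (m - 1) = g + 1 + y * (n - 1) := by omega
    rw [e] at h1
    exact c.trans h1 (c.symm h2)
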